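/- For every x ∈ ℝ, 1 − c(x) = (π/4) ∫_ℝ ( cos(ux) − 1 ) / sinh²(πu/2) du, the integral converging absolutely (the integrand extends continuously to u = 0). Equivalently, 1 − x coth(x) = ∫_{ℝ∖{0}} (e^{iux} − 1) (π/4) du/sinh²(πu/2). -/

import Mathlib

open Real MeasureTheory

/-- The continuous extension of `x ↦ x * coth x`. -/
noncomputable def cFun (x : ℝ) : ℝ := if x = 0 then 1 else x * Real.cosh x / Real.sinh x

/-- The integrand `u ↦ (cos(ux) - 1)/sinh²(πu/2)`, extended continuously at `u = 0`
(where its limit is `-2x²/π²`). -/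
noncomputable def levyIntegrand (x : ℝ) (u : ℝ) : ℝ :=
  if u = 0 then -2 * x ^ 2 / Real.pi ^ 2
  else (Real.cos (u * x) - 1) / Real.sinh (Real.pi * u / 2) ^ 2

section Aux
open Filter Topology Set



lemma integrableOn_exp_cos {b : ℝ} (hb : 0 < b) (c : ℝ) :
    IntegrableOn (fun u => Real.exp (-b * u) * Real.cos (c * u)) (Ioi 0) := by
  refine (exp_neg_integrableOn_Ioi 0 hb).mono' ?_ ?_
  · exact ((Real.continuous_exp.comp (continuous_const.mul continuous_id)).mul
      (Real.continuous_cos.comp (continuous_const.mul continuous_id))).aestronglyMeasurable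
  · filter_upwards with u
    rw [norm_mul, Real.norm_eq_abs, Real.norm_eq_abs, Real.abs_exp]
    nlinarith [abs_cos_le_one (c * u), Real.exp_pos (-b * u), abs_nonneg (Real.cos (c*u))]

lemma integral_exp_cos {b : ℝ} (hb : 0 < b) (c : ℝ) :
    ∫ u in Ioi (0:ℝ), Real.exp (-b * u) * Real.cos (c * u) = b / (b ^ 2 + c ^ 2) := by
  have hD : 0 < b ^ 2 + c ^ 2 := by positivity
  have key : ∀ u : ℝ, HasDerivAt
      (fun v => Real.exp (-b * v) * (c * Real.sin (c * v) - b * Real.cos (c * v)) / (b ^ 2 + c ^ 2))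
      (Real.exp (-b * u) * Real.cos (c * u)) u := by
    intro u
    have h1 : HasDerivAt (fun v => Real.exp (-b * v)) (-b * Real.exp (-b * u)) u := by
      simpa [mul_comm] using (HasDerivAt.exp ((hasDerivAt_id u).const_mul (-b)))
    have h2 : HasDerivAt (fun v => c * Real.sin (c * v) - b * Real.cos (c * v))
        (c * (c * Real.cos (c * u)) - b * (-(c * Real.sin (c * u)))) u := by
      have hcu : HasDerivAt (fun v : ℝ => c * v) c u := by
        simpa using (hasDerivAt_id u).const_mul c
      have hs : HasDerivAt (fun v => Real.sin (c * v)) (Real.cos (c * u) * c) u :=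
        (Real.hasDerivAt_sin (c*u)).comp u hcu
      have hc : HasDerivAt (fun v => Real.cos (c * v)) (-Real.sin (c * u) * c) u :=
        (Real.hasDerivAt_cos (c*u)).comp u hcu
      have : HasDerivAt (fun v => c * Real.sin (c * v) - b * Real.cos (c * v)) _ u := (hs.const_mul c).sub (hc.const_mul b)
      convert this using 1; ring
    have : HasDerivAt (fun v => Real.exp (-b * v) * (c * Real.sin (c * v) - b * Real.cos (c * v)) / (b ^ 2 + c ^ 2)) _ u := (h1.mul h2).div_const (b ^ 2 + c ^ 2)
    convert this using 1
    field_simp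
    ring
  have lim : Tendsto
      (fun u => Real.exp (-b * u) * (c * Real.sin (c * u) - b * Real.cos (c * u)) / (b ^ 2 + c ^ 2))
      atTop (nhds 0) := by
    have h1 : Tendsto (fun u : ℝ => Real.exp (-b * u)) atTop (nhds 0) :=
      Real.tendsto_exp_atBot.comp (tendsto_id.const_mul_atTop_of_neg (by linarith))
    have hB : ∀ u : ℝ, |c * Real.sin (c * u) - b * Real.cos (c * u)| ≤ |c| + |b| := by
      intro u
      calc |c * Real.sin (c * u) - b * Real.cos (c * u)|
          ≤ |c * Real.sin (c * u)| + |b * Real.cos (c * u)| := abs_sub _ _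
        _ ≤ |c| + |b| := by
            rw [abs_mul, abs_mul]
            have := abs_sin_le_one (c*u); have := abs_cos_le_one (c*u)
            nlinarith [abs_nonneg c, abs_nonneg b]
    have h0 : Tendsto (fun u : ℝ => Real.exp (-b * u) * (c * Real.sin (c * u) - b * Real.cos (c * u))) atTop (nhds 0) := by
      have := h1.const_mul (|c| + |b|)
      rw [mul_zero] at this
      apply squeeze_zero_norm _ this
      intro u
      rw [norm_mul, Real.norm_eq_abs, Real.norm_eq_abs, Real.abs_exp]
      rw [mul_comm ((|c|+|b|))]
      gcongr
      exact hB u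
    simpa using h0.div_const (b ^ 2 + c ^ 2)
  have := integral_Ioi_of_hasDerivAt_of_tendsto (f := fun v => Real.exp (-b * v) * (c * Real.sin (c * v) - b * Real.cos (c * v)) / (b ^ 2 + c ^ 2)) (Continuous.continuousWithinAt (by
      exact ((Real.continuous_exp.comp (continuous_const.mul continuous_id)).mul
        ((continuous_const.mul (Real.continuous_sin.comp (continuous_const.mul continuous_id))).sub
          (continuous_const.mul (Real.continuous_cos.comp (continuous_const.mul continuous_id))))).div_const _)) (fun u _ => key u) (integrableOn_exp_cos hb c) lim
  rw [this]
  simp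
  field_simp


lemma euler_sinh_prod {x : ℝ} (hx : x ≠ 0) :
    Tendsto (fun n : ℕ => ∏ j ∈ Finset.range n, (1 + x ^ 2 / (π ^ 2 * (j + 1) ^ 2)))
      atTop (𝓝 (Real.sinh x / x)) := by
  have hπ : (π : ℝ) ≠ 0 := Real.pi_ne_zero
  have hπC : (π : ℂ) ≠ 0 := Complex.ofReal_ne_zero.mpr hπ
  have h := Complex.tendsto_euler_sin_prod ((x / π : ℝ) * Complex.I)
  have hxI : (x : ℂ) * Complex.I ≠ 0 := by
    simp [Complex.I_ne_zero, Complex.ofReal_ne_zero, hx]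
  have key : Tendsto (fun n : ℕ =>
      ((x : ℂ) * Complex.I)⁻¹ * ((x : ℂ) * Complex.I *
        ∏ j ∈ Finset.range n, ((1 : ℂ) + (x:ℂ) ^ 2 / ((π:ℂ) ^ 2 * ((j : ℂ) + 1) ^ 2))))
      atTop (𝓝 (((x : ℂ) * Complex.I)⁻¹ * ((Real.sinh x : ℂ) * Complex.I))) := by
    refine Tendsto.const_mul _ ?_
    convert h using 2 with n
    · congr 1
      · push_cast
        field_simp
      · refine Finset.prod_congr rfl fun j _ => ?_
        have : ((x / π : ℝ) * Complex.I) ^ 2 = -((x:ℂ)^2 / (π:ℂ)^2) := by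
          push_cast
          rw [mul_pow, Complex.I_sq]
          ring
        rw [this]
        push_cast
        field_simp
        ring
    · rw [show ((π:ℂ) * ((x / π : ℝ) * Complex.I)) = (x:ℂ) * Complex.I by push_cast; field_simp]
      rw [Complex.sin_mul_I, Complex.ofReal_sinh]
  have heq : ∀ n : ℕ, ((x : ℂ) * Complex.I)⁻¹ * ((x : ℂ) * Complex.I *
        ∏ j ∈ Finset.range n, ((1 : ℂ) + (x:ℂ) ^ 2 / ((π:ℂ) ^ 2 * ((j : ℂ) + 1) ^ 2)))
      = ((∏ j ∈ Finset.range n, (1 + x ^ 2 / (π ^ 2 * ((j:ℝ) + 1) ^ 2)) : ℝ) : ℂ) := by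
    intro n
    rw [inv_mul_cancel_left₀ hxI]
    push_cast
    rfl
  rw [funext heq] at key
  have hval : ((x : ℂ) * Complex.I)⁻¹ * ((Real.sinh x : ℂ) * Complex.I)
      = ((Real.sinh x / x : ℝ) : ℂ) := by
    have hxC : (x:ℂ) ≠ 0 := Complex.ofReal_ne_zero.mpr hx
    push_cast
    field_simp [Complex.I_ne_zero]
  rw [hval] at key
  have := (Complex.continuous_re.tendsto _).comp key
  simpa only [Function.comp_def, Complex.ofReal_re] using this


lemma hasSum_log_sinh {x : ℝ} (hx : 0 < x) :
    HasSum (fun n : ℕ => Real.log (1 + x ^ 2 / (π ^ 2 * ((n:ℝ) + 1) ^ 2)))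
      (Real.log (Real.sinh x / x)) := by
  have hπ : (0:ℝ) < π := Real.pi_pos
  have hpos : ∀ n : ℕ, (0:ℝ) < 1 + x ^ 2 / (π ^ 2 * ((n:ℝ) + 1) ^ 2) := by
    intro n; positivity
  rw [hasSum_iff_tendsto_nat_of_nonneg
    (fun n => Real.log_nonneg (le_add_of_nonneg_right (by positivity)))]
  have hsx : (0:ℝ) < Real.sinh x / x := div_pos (Real.sinh_pos_iff.mpr hx) hx
  have hlog := (Real.continuousAt_log hsx.ne').tendsto.comp (euler_sinh_prod hx.ne')
  simp only [Function.comp_def] at hlog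
  convert hlog using 2 with n
  rw [Real.log_prod (fun j _ => (hpos j).ne')]

lemma coth_series {x : ℝ} (hx : 0 < x) :
    HasSum (fun n : ℕ => 2 * x ^ 2 / (x ^ 2 + π ^ 2 * ((n:ℝ) + 1) ^ 2))
      (x * Real.cosh x / Real.sinh x - 1) := by
  have hπ : (0:ℝ) < π := Real.pi_pos
  set R : ℝ := x + 1 with hR
  set s : Set ℝ := Ioo 0 R with hs
  have hxs : x ∈ s := ⟨hx, by simp [hR]⟩
  -- the series of derivatives
  have hbase : Summable (fun n : ℕ => 1 / ((n:ℝ) + 1) ^ 2) := by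
    have := (summable_nat_add_iff 1).mpr (Real.summable_one_div_nat_pow.mpr one_lt_two)
    apply this.congr
    intro n
    push_cast
    ring
  have hu : Summable (fun n : ℕ => 2 * R / (π ^ 2 * ((n:ℝ) + 1) ^ 2)) := by
    apply (hbase.mul_left (2 * R / π ^ 2)).congr
    intro n
    field_simp
  have hderiv : ∀ n : ℕ, ∀ y : ℝ, y ∈ s →
      HasDerivAt (fun z => Real.log (1 + z ^ 2 / (π ^ 2 * ((n:ℝ) + 1) ^ 2)))
        (2 * y / (y ^ 2 + π ^ 2 * ((n:ℝ) + 1) ^ 2)) y := by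
    intro n y hy
    have hc : (0:ℝ) < π ^ 2 * ((n:ℝ) + 1) ^ 2 := by positivity
    have h1 : HasDerivAt (fun z : ℝ => 1 + z ^ 2 / (π ^ 2 * ((n:ℝ) + 1) ^ 2))
        (2 * y / (π ^ 2 * ((n:ℝ) + 1) ^ 2)) y := by
      have := ((hasDerivAt_pow 2 y).div_const (π ^ 2 * ((n:ℝ) + 1) ^ 2)).const_add 1
      simpa [mul_comm] using this
    have hne : (1 + y ^ 2 / (π ^ 2 * ((n:ℝ) + 1) ^ 2)) ≠ 0 := by positivity
    have := h1.log hne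
    convert this using 1
    rw [eq_div_iff hne]
    field_simp
    ring
  have hbound : ∀ n : ℕ, ∀ y : ℝ, y ∈ s →
      ‖2 * y / (y ^ 2 + π ^ 2 * ((n:ℝ) + 1) ^ 2)‖ ≤ 2 * R / (π ^ 2 * ((n:ℝ) + 1) ^ 2) := by
    intro n y hy
    obtain ⟨hy0, hyR⟩ := hy
    rw [Real.norm_eq_abs, abs_of_nonneg (by positivity)]
    apply div_le_div₀ (by positivity) (by nlinarith) (by positivity) (by nlinarith)
  have hsum := hasDerivAt_tsum_of_isPreconnected hu isOpen_Ioo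
    (isPreconnected_Ioo) hderiv hbound hxs ((hasSum_log_sinh hx).summable) hxs
  -- identify the tsum function with log (sinh z / z) on s
  have hcongr : (fun z => ∑' n : ℕ, Real.log (1 + z ^ 2 / (π ^ 2 * ((n:ℝ) + 1) ^ 2)))
      =ᶠ[𝓝 x] (fun z => Real.log (Real.sinh z) - Real.log z) := by
    filter_upwards [isOpen_Ioo.mem_nhds hxs] with z hz
    rw [(hasSum_log_sinh hz.1).tsum_eq, Real.log_div (Real.sinh_pos_iff.mpr hz.1).ne' hz.1.ne']
  have hF : HasDerivAt (fun z => Real.log (Real.sinh z) - Real.log z)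
      (∑' n : ℕ, 2 * x / (x ^ 2 + π ^ 2 * ((n:ℝ) + 1) ^ 2)) x :=
    hsum.congr_of_eventuallyEq hcongr.symm
  -- compute the derivative of log sinh - log directly
  have hG : HasDerivAt (fun z => Real.log (Real.sinh z) - Real.log z)
      (Real.cosh x / Real.sinh x - 1 / x) x := by
    have h1 : HasDerivAt (fun z => Real.log (Real.sinh z)) (Real.cosh x / Real.sinh x) x := by
      have := (Real.hasDerivAt_sinh x).log (Real.sinh_pos_iff.mpr hx).ne'
      simpa using this
    have h2 : HasDerivAt Real.log (1 / x) x := by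
      simpa [one_div] using Real.hasDerivAt_log hx.ne'
    exact h1.sub h2
  have hkey : (∑' n : ℕ, 2 * x / (x ^ 2 + π ^ 2 * ((n:ℝ) + 1) ^ 2))
      = Real.cosh x / Real.sinh x - 1 / x := hF.unique hG
  -- multiply by x
  have hsummable : Summable (fun n : ℕ => 2 * x / (x ^ 2 + π ^ 2 * ((n:ℝ) + 1) ^ 2)) := by
    apply Summable.of_nonneg_of_le (fun n => by positivity) (fun n => hbound n x hxs |>.trans_eq' ?_) hu
    rw [Real.norm_eq_abs, abs_of_nonneg (by positivity)]
  have := (hsummable.hasSum_iff.mpr hkey).mul_left x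
  have e1 : ∀ n : ℕ, x * (2 * x / (x ^ 2 + π ^ 2 * ((n:ℝ) + 1) ^ 2))
      = 2 * x ^ 2 / (x ^ 2 + π ^ 2 * ((n:ℝ) + 1) ^ 2) := fun n => by ring
  have e2 : x * (Real.cosh x / Real.sinh x - 1 / x) = x * Real.cosh x / Real.sinh x - 1 := by
    rw [mul_sub, mul_one_div, div_self hx.ne', mul_div_assoc]
  simp only [e1, e2] at this
  exact this
lemma hasSum_sinh_sq_inv {u : ℝ} (hu : 0 < u) :
    HasSum (fun n : ℕ => 4 * ((n:ℝ) + 1) * Real.exp (-(π * ((n:ℝ) + 1)) * u))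
      (1 / Real.sinh (π * u / 2) ^ 2) := by
  have hπ : (0:ℝ) < π := Real.pi_pos
  set r : ℝ := Real.exp (-(π * u)) with hrdef
  have hr0 : 0 < r := Real.exp_pos _
  have hr1 : r < 1 := by
    rw [hrdef]
    apply Real.exp_lt_one_iff.mpr
    nlinarith
  have h0 : HasSum (fun n : ℕ => (n:ℝ) * r ^ n) (r / (1 - r) ^ 2) :=
    hasSum_coe_mul_geometric_of_norm_lt_one (by rw [Real.norm_eq_abs, abs_of_pos hr0]; exact hr1)
  have h1 : HasSum (fun n : ℕ => (((n:ℝ) + 1) * r ^ (n + 1))) (r / (1 - r) ^ 2) := by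
    have := (hasSum_nat_add_iff (f := fun n : ℕ => (n:ℝ) * r ^ n) 1).mpr (by simpa using h0)
    simpa using this
  have h2 := h1.mul_left 4
  have hterm : ∀ n : ℕ, 4 * (((n:ℝ) + 1) * r ^ (n + 1))
      = 4 * ((n:ℝ) + 1) * Real.exp (-(π * ((n:ℝ) + 1)) * u) := by
    intro n
    rw [hrdef, ← Real.exp_nat_mul]
    push_cast
    ring_nf
  have hval : 4 * (r / (1 - r) ^ 2) = 1 / Real.sinh (π * u / 2) ^ 2 := by
    set a : ℝ := Real.exp (π * u / 2) with hadef
    have ha1 : 1 < a := by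
      rw [hadef]
      have h := Real.exp_lt_exp (x := (0:ℝ)) (y := π * u / 2) |>.mpr (by positivity)
      simpa using h
    have hra : r = (a * a)⁻¹ := by
      rw [hrdef, hadef, ← Real.exp_add, ← Real.exp_neg]
      ring_nf
    have hsinh : Real.sinh (π * u / 2) = (a - a⁻¹) / 2 := by
      rw [Real.sinh_eq, hadef, Real.exp_neg]
    rw [hra, hsinh]
    have ha0 : a ≠ 0 := by positivity
    have hne : a - a⁻¹ ≠ 0 := by
      have : 0 < a - a⁻¹ := by
        have : a⁻¹ < 1 := by
          rw [inv_lt_one_iff₀]; right; exact ha1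
        linarith
      exact this.ne'
    have hne2 : 1 - (a * a)⁻¹ ≠ 0 := by
      have : (a * a)⁻¹ < 1 := by
        rw [inv_lt_one_iff₀]; right; nlinarith
      intro h; rw [sub_eq_zero] at h; rw [← h] at this; exact lt_irrefl _ this
    have key : (a - a⁻¹) ^ 2 = (1 - (a * a)⁻¹) ^ 2 * a ^ 2 := by
      field_simp
    rw [div_pow, key]
    field_simp
    ring
  rw [← hval]
  exact h2.congr_fun fun n => (hterm n).symm

lemma levy_measurable (x : ℝ) : Measurable (levyIntegrand x) := by
  unfold levyIntegrand
  refine Measurable.ite (measurableSet_eq) measurable_const ?_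
  apply Measurable.div
  · exact ((Real.continuous_cos.comp (continuous_id.mul continuous_const)).sub
      continuous_const).measurable
  · exact ((Real.continuous_sinh.comp ((continuous_const.mul continuous_id).div_const 2)).pow 2).measurable

lemma levy_hasSum {x u : ℝ} (hu : 0 < u) :
    HasSum (fun n : ℕ => 4 * ((n:ℝ) + 1) * ((1 - Real.cos (u * x)) * Real.exp (-(π * ((n:ℝ) + 1)) * u)))
      (-(levyIntegrand x u)) := by
  have h := (hasSum_sinh_sq_inv hu).mul_left (1 - Real.cos (u * x))
  rw [levyIntegrand, if_neg hu.ne']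
  have hval : (1 - Real.cos (u * x)) * (1 / Real.sinh (π * u / 2) ^ 2)
      = -((Real.cos (u * x) - 1) / Real.sinh (π * u / 2) ^ 2) := by
    rw [mul_one_div, ← neg_div, neg_sub]
  rw [hval] at h
  exact h.congr_fun fun n => by ring

lemma levy_Ioi (x : ℝ) :
    IntegrableOn (levyIntegrand x) (Ioi 0) ∧
      ∫ u in Ioi (0:ℝ), levyIntegrand x u
        = -(4 * x ^ 2 / π) * ∑' n : ℕ, 1 / (x ^ 2 + π ^ 2 * ((n:ℝ) + 1) ^ 2) := by
  have hπ := Real.pi_pos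
  set g : ℕ → ℝ → ℝ :=
    fun n u => 4 * ((n:ℝ) + 1) * ((1 - Real.cos (u * x)) * Real.exp (-(π * ((n:ℝ) + 1)) * u))
    with hg
  have hb : ∀ n : ℕ, (0:ℝ) < π * ((n:ℝ) + 1) := fun n => by positivity
  have hgnonneg : ∀ n u, 0 ≤ g n u := by
    intro n u
    have h1 := Real.cos_le_one (u * x)
    have h2 := (Real.exp_pos (-(π * ((n:ℝ) + 1)) * u)).le
    have : (0:ℝ) ≤ 1 - Real.cos (u * x) := by linarith
    positivity
  have hgmeas : ∀ n : ℕ, Measurable (g n) := by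
    intro n
    apply Measurable.const_mul
    exact ((continuous_const.sub (Real.continuous_cos.comp
      (continuous_id.mul continuous_const))).mul
      (Real.continuous_exp.comp (continuous_const.mul continuous_id))).measurable
  have hgint : ∀ n : ℕ, IntegrableOn (g n) (Ioi 0) := by
    intro n
    have h1 : IntegrableOn (fun u : ℝ => Real.exp (-(π * ((n:ℝ)+1)) * u)) (Ioi 0) :=
      exp_neg_integrableOn_Ioi 0 (hb n)
    have h2 := integrableOn_exp_cos (hb n) x
    apply IntegrableOn.congr_fun ((h1.sub h2).const_mul (4 * ((n:ℝ) + 1)))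
      (fun u _ => ?_) measurableSet_Ioi
    simp only [Pi.sub_apply]
    rw [mul_comm x u]
    ring
  have hgval : ∀ n : ℕ, ∫ u in Ioi (0:ℝ), g n u
      = 4 * x ^ 2 / π * (1 / (x ^ 2 + π ^ 2 * ((n:ℝ) + 1) ^ 2)) := by
    intro n
    have h1 : ∫ u in Ioi (0:ℝ), Real.exp (-(π * ((n:ℝ)+1)) * u) = 1 / (π * ((n:ℝ)+1)) := by
      have := integral_exp_cos (hb n) 0
      simp only [zero_mul, Real.cos_zero, mul_one] at this
      rw [this]
      rw [eq_div_iff (hb n).ne']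
      field_simp
      ring
    have h2 : ∫ u in Ioi (0:ℝ), Real.exp (-(π * ((n:ℝ)+1)) * u) * Real.cos (u * x)
        = (π * ((n:ℝ)+1)) / ((π * ((n:ℝ)+1)) ^ 2 + x ^ 2) := by
      have := integral_exp_cos (hb n) x
      rw [← this]
      congr 1
      ext u
      rw [mul_comm x u]
    have heq : ∀ u : ℝ, g n u = (4 * ((n:ℝ)+1)) *
        (Real.exp (-(π * ((n:ℝ)+1)) * u) - Real.exp (-(π * ((n:ℝ)+1)) * u) * Real.cos (u * x)) := by
      intro u; rw [hg]; ring
    rw [funext heq, MeasureTheory.integral_const_mul, integral_sub (exp_neg_integrableOn_Ioi 0 (hb n))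
      (((integrableOn_exp_cos (hb n) x).congr_fun (fun u _ => by beta_reduce; rw [mul_comm x u]) measurableSet_Ioi)),
      h1, h2]
    have hd1 : (x ^ 2 + π ^ 2 * ((n:ℝ) + 1) ^ 2) ≠ 0 := by positivity
    field_simp
    ring
  have hbase : Summable (fun n : ℕ => 1 / ((n:ℝ) + 1) ^ 2) := by
    have := (summable_nat_add_iff 1).mpr (Real.summable_one_div_nat_pow.mpr one_lt_two)
    apply this.congr
    intro n
    push_cast
    ring
  have hSsum : Summable (fun n : ℕ => 1 / (x ^ 2 + π ^ 2 * ((n:ℝ) + 1) ^ 2)) := by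
    apply Summable.of_nonneg_of_le (fun n => by positivity) (fun n => ?_)
      (hbase.mul_left (π ^ 2)⁻¹)
    rw [mul_one_div, div_le_div_iff₀ (by positivity) (by positivity)]
    have hinv : (π ^ 2)⁻¹ * π ^ 2 = 1 := inv_mul_cancel₀ (by positivity)
    have hinvpos : (0:ℝ) < (π ^ 2)⁻¹ := by positivity
    nlinarith [sq_nonneg x, sq_nonneg ((n:ℝ)+1)]
  have hvalsum : Summable (fun n : ℕ => 4 * x ^ 2 / π * (1 / (x ^ 2 + π ^ 2 * ((n:ℝ) + 1) ^ 2))) :=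
    hSsum.mul_left _
  have hvnonneg : ∀ n : ℕ, (0:ℝ) ≤ 4 * x ^ 2 / π * (1 / (x ^ 2 + π ^ 2 * ((n:ℝ) + 1) ^ 2)) :=
    fun n => by positivity
  -- the key lintegral computation
  have hlin : ∀ n : ℕ, ∫⁻ u in Ioi (0:ℝ), ENNReal.ofReal (g n u)
      = ENNReal.ofReal (4 * x ^ 2 / π * (1 / (x ^ 2 + π ^ 2 * ((n:ℝ) + 1) ^ 2))) := by
    intro n
    rw [← hgval n, ← ofReal_integral_eq_lintegral_ofReal (hgint n)
      (Filter.Eventually.of_forall (fun u => hgnonneg n u))]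
  have hlinsum : ∑' n : ℕ, ∫⁻ u in Ioi (0:ℝ), ENNReal.ofReal (g n u) ≠ ⊤ := by
    rw [tsum_congr hlin, ← ENNReal.ofReal_tsum_of_nonneg hvnonneg hvalsum]
    exact ENNReal.ofReal_ne_top
  have hae : ∀ u ∈ Ioi (0:ℝ), levyIntegrand x u = -∑' n : ℕ, g n u := by
    intro u hu
    rw [(levy_hasSum hu).tsum_eq, neg_neg]
  have hnorm : ∀ u ∈ Ioi (0:ℝ), ENNReal.ofReal ‖levyIntegrand x u‖
      = ∑' n : ℕ, ENNReal.ofReal (g n u) := by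
    intro u hu
    have hsum := (levy_hasSum (x := x) hu).summable
    rw [← ENNReal.ofReal_tsum_of_nonneg (fun n => hgnonneg n u) hsum]
    congr 1
    rw [hae u hu, norm_neg, Real.norm_eq_abs, abs_of_nonneg (tsum_nonneg (fun n => hgnonneg n u))]
  have hintOn : IntegrableOn (levyIntegrand x) (Ioi 0) := by
    constructor
    · exact (levy_measurable x).aestronglyMeasurable.restrict
    · rw [hasFiniteIntegral_iff_norm]
      rw [setLIntegral_congr_fun measurableSet_Ioi hnorm]
      rw [lintegral_tsum (fun n => ((hgmeas n).ennreal_ofReal).aemeasurable)]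
      rw [tsum_congr hlin, ← ENNReal.ofReal_tsum_of_nonneg hvnonneg hvalsum]
      exact ENNReal.ofReal_lt_top
  refine ⟨hintOn, ?_⟩
  have hint : ∫ u in Ioi (0:ℝ), levyIntegrand x u = -∫ u in Ioi (0:ℝ), ∑' n : ℕ, g n u := by
    rw [← MeasureTheory.integral_neg]
    exact setIntegral_congr_fun measurableSet_Ioi (fun u hu => by rw [hae u hu])
  rw [hint, MeasureTheory.integral_tsum
    (fun n => (hgmeas n).aestronglyMeasurable.restrict) ?_]
  · rw [tsum_congr hgval, tsum_mul_left]
    ring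
  · have : ∀ n : ℕ, ∫⁻ u in Ioi (0:ℝ), ‖g n u‖ₑ
        = ∫⁻ u in Ioi (0:ℝ), ENNReal.ofReal (g n u) := by
      intro n
      apply lintegral_congr
      intro u
      rw [← Real.enorm_eq_ofReal (hgnonneg n u)]
    rw [tsum_congr this]
    exact hlinsum

lemma levy_neg (x u : ℝ) : levyIntegrand x (-u) = levyIntegrand x u := by
  unfold levyIntegrand
  by_cases hu : u = 0
  · simp [hu]
  · rw [if_neg hu, if_neg (neg_ne_zero.mpr hu)]
    rw [neg_mul, Real.cos_neg, mul_neg, neg_div, Real.sinh_neg, neg_pow]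
    norm_num

lemma levy_abs (x u : ℝ) : levyIntegrand x |u| = levyIntegrand x u := by
  rcases abs_choice u with h | h
  · rw [h]
  · rw [h, levy_neg]

lemma levy_integrable (x : ℝ) : Integrable (levyIntegrand x) := by
  have hIoi := (levy_Ioi x).1
  have hIic : IntegrableOn (levyIntegrand x) (Iic 0) := by
    rw [← Measure.map_neg_eq_self (volume : Measure ℝ)]
    have m : MeasurableEmbedding fun x : ℝ => -x := (Homeomorph.neg ℝ).measurableEmbedding
    rw [m.integrableOn_map_iff]
    simp_rw [Function.comp_def, neg_preimage, neg_Iic, neg_zero]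
    apply Iff.mpr integrableOn_Ici_iff_integrableOn_Ioi
    exact hIoi.congr_fun (fun u _ => (levy_neg x u).symm) measurableSet_Ioi
  have := hIic.union hIoi
  rwa [Iic_union_Ioi, integrableOn_univ] at this

lemma levy_integral (x : ℝ) :
    ∫ u : ℝ, levyIntegrand x u = 2 * ∫ u in Ioi (0:ℝ), levyIntegrand x u := by
  rw [← integral_comp_abs (f := levyIntegrand x)]
  congr 1
  ext u
  rw [levy_abs]

lemma levy_main_pos {x : ℝ} (hx : 0 < x) :
    1 - x * Real.cosh x / Real.sinh x = π / 4 * ∫ u : ℝ, levyIntegrand x u := by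
  have hπ := Real.pi_pos
  set S : ℝ := ∑' n : ℕ, 1 / (x ^ 2 + π ^ 2 * ((n:ℝ) + 1) ^ 2) with hS
  have h1 : x * Real.cosh x / Real.sinh x - 1 = 2 * x ^ 2 * S := by
    rw [← (coth_series hx).tsum_eq, hS, ← tsum_mul_left]
    exact tsum_congr fun n => by rw [mul_one_div]
  rw [levy_integral, (levy_Ioi x).2, ← hS]
  have : π / 4 * (2 * (-(4 * x ^ 2 / π) * S)) = -(2 * x ^ 2 * S) := by
    field_simp
  rw [this, ← h1]
  ring


lemma levy_even_x (x : ℝ) : levyIntegrand (-x) = levyIntegrand x := by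
  funext u
  unfold levyIntegrand
  simp only [mul_neg, Real.cos_neg, neg_sq]

end Aux

/-- Lévy–Khintchine formula: for every `x ∈ ℝ`,
`1 - x coth x = (π/4) ∫_ℝ (cos(ux) - 1)/sinh²(πu/2) du`,
the integral converging absolutely. -/
theorem stmt12 (x : ℝ) :
    MeasureTheory.Integrable (levyIntegrand x) ∧
      1 - cFun x = Real.pi / 4 * ∫ u : ℝ, levyIntegrand x u := by
  refine ⟨levy_integrable x, ?_⟩
  rcases lt_trichotomy x 0 with hx | hx | hx
  · have h := levy_main_pos (x := -x) (by linarith)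
    rw [levy_even_x, Real.cosh_neg, Real.sinh_neg] at h
    rw [cFun, if_neg hx.ne]
    rw [← h]
    congr 1
    rw [neg_mul, neg_div, div_neg, neg_neg]
  · subst hx
    have h0 : levyIntegrand 0 = fun _ : ℝ => (0:ℝ) := by
      funext u
      unfold levyIntegrand
      by_cases hu : u = 0 <;> simp [hu]
    rw [h0, cFun]
    simp
  · rw [cFun, if_neg hx.ne']
    exact levy_main_pos hx
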